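/- For each T > 0 and w ∈ ℝ^n, the equilibrium points of the transformed system (quadODE) are exactly the points (ν, 0) ∈ ℝ^{m+1} with ν_i ∈ {0, 2/T} for i ∈ I and ν_i = 0 for i ∉ I. Every equilibrium point is hyperbolic (all eigenvalues of the Jacobian of the vector field at the equilibrium equal 1 or −1), and the origin is the unique asymptotically stable equilibrium point of the system. -/

import Mathlib

open Filter Topology

noncomputable section

/-- `g_i(w) = (1/2) wᵀ π_i w + (A^C w)_i`. -/
def gfun {m n : ℕ} (π : Fin m → Matrix (Fin n) (Fin n) ℝ)
    (AC : Matrix (Fin m) (Fin n) ℝ) (w : Fin n → ℝ) (i : Fin m) : ℝ :=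
  (1 / 2) * (∑ j, ∑ k, w j * π i j k * w k) + ∑ j, AC i j * w j

/-- `f_i(v,w) = (1/2) v_i² 1_{i∈I} + Σ_{k ≤ i} A^V_{ik} v_k + g_i(w)`. -/
def fRic {m n : ℕ} (I : Finset (Fin m)) (AV : Matrix (Fin m) (Fin m) ℝ)
    (π : Fin m → Matrix (Fin n) (Fin n) ℝ) (AC : Matrix (Fin m) (Fin n) ℝ)
    (v : Fin m → ℝ) (w : Fin n → ℝ) (i : Fin m) : ℝ :=
  (1 / 2) * (v i) ^ 2 * (if i ∈ I then 1 else 0)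
    + (∑ k ∈ Finset.univ.filter (fun k => k ≤ i), AV i k * v k)
    + gfun π AC w i

/-- `E(w) = {v : f_i(v,w) ≤ 0 ∀ i}`. -/
def Eset {m n : ℕ} (I : Finset (Fin m)) (AV : Matrix (Fin m) (Fin m) ℝ)
    (π : Fin m → Matrix (Fin n) (Fin n) ℝ) (AC : Matrix (Fin m) (Fin n) ℝ)
    (w : Fin n → ℝ) : Set (Fin m → ℝ) :=
  {v | ∀ i, fRic I AV π AC v w i ≤ 0}

/-- `E°(w) = {v : f_i(v,w) < 0 ∀ i}`. -/
def EsetO {m n : ℕ} (I : Finset (Fin m)) (AV : Matrix (Fin m) (Fin m) ℝ)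
    (π : Fin m → Matrix (Fin n) (Fin n) ℝ) (AC : Matrix (Fin m) (Fin n) ℝ)
    (w : Fin n → ℝ) : Set (Fin m → ℝ) :=
  {v | ∀ i, fRic I AV π AC v w i < 0}

/-- `𝔇 = {w ∈ Ker A^D : E(w) ≠ ∅}`. -/
def Dset {m n : ℕ} (I : Finset (Fin m)) (AV : Matrix (Fin m) (Fin m) ℝ)
    (π : Fin m → Matrix (Fin n) (Fin n) ℝ) (AC : Matrix (Fin m) (Fin n) ℝ)
    (AD : Matrix (Fin n) (Fin n) ℝ) : Set (Fin n → ℝ) :=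
  {w | AD.mulVec w = 0 ∧ (Eset I AV π AC w).Nonempty}

/-- `𝔇° = {w ∈ Ker A^D : E°(w) ≠ ∅}`. -/
def DsetO {m n : ℕ} (I : Finset (Fin m)) (AV : Matrix (Fin m) (Fin m) ℝ)
    (π : Fin m → Matrix (Fin n) (Fin n) ℝ) (AC : Matrix (Fin m) (Fin n) ℝ)
    (AD : Matrix (Fin n) (Fin n) ℝ) : Set (Fin n → ℝ) :=
  {w | AD.mulVec w = 0 ∧ (EsetO I AV π AC w).Nonempty}
/-- The vector field of the transformed system (quadODE) on `ℝ^{m+1}`. -/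
def Fq {m n : ℕ} (I : Finset (Fin m)) (AV : Matrix (Fin m) (Fin m) ℝ)
    (π : Fin m → Matrix (Fin n) (Fin n) ℝ) (AC : Matrix (Fin m) (Fin n) ℝ)
    (T : ℝ) (w : Fin n → ℝ) (x : Fin (m + 1) → ℝ) (i : Fin (m + 1)) : ℝ :=
  if h : (i : ℕ) < m then
    (T / 2) * (x i) ^ 2 * (if (⟨i.1, h⟩ : Fin m) ∈ I then 1 else 0) - x i
      + T * (∑ k ∈ Finset.univ.filter (fun k : Fin m => k ≤ (⟨i.1, h⟩ : Fin m)),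
          AV ⟨i.1, h⟩ k * x k.castSucc) * x (Fin.last m)
      + T * (x (Fin.last m)) ^ 2 * gfun π AC w ⟨i.1, h⟩
  else
    -x i

/-- Stable set `W^s_ν(w,T)` of an equilibrium `(ν,0)` of (quadODE): initial conditions `v`
such that the (quadODE) solution starting at `(v,1)` is global and converges to `(ν,0)`. -/
def WsQ {m n : ℕ} (I : Finset (Fin m)) (AV : Matrix (Fin m) (Fin m) ℝ)
    (π : Fin m → Matrix (Fin n) (Fin n) ℝ) (AC : Matrix (Fin m) (Fin n) ℝ)
    (T : ℝ) (w : Fin n → ℝ) (ν : Fin m → ℝ) : Set (Fin m → ℝ) :=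
  {v | ∃ x : ℝ → Fin (m + 1) → ℝ, x 0 = Fin.snoc v 1 ∧
    (∀ s : ℝ, 0 ≤ s → HasDerivAt x (Fq I AV π AC T w (x s)) s) ∧
    Filter.Tendsto x Filter.atTop (nhds (Fin.snoc ν 0))}

/-- `S_T` as a subset of `ℝ^m × Ker A^D`: pairs `(v,w)` whose (Ric-V) solution stays
finite for all `t < T`, i.e. `T*(v,w) ≥ T`. -/
def STP {m n : ℕ} (I : Finset (Fin m)) (AV : Matrix (Fin m) (Fin m) ℝ)
    (π : Fin m → Matrix (Fin n) (Fin n) ℝ) (AC : Matrix (Fin m) (Fin n) ℝ)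
    (AD : Matrix (Fin n) (Fin n) ℝ) (T : ℝ) :
    Set {p : (Fin m → ℝ) × (Fin n → ℝ) // AD.mulVec p.2 = 0} :=
  {p | ∃ y : ℝ → Fin m → ℝ, y 0 = p.val.1 ∧
    ∀ t : ℝ, 0 ≤ t → t < T → HasDerivAt y (fRic I AV π AC (y t) p.val.2) t}

open scoped ENNReal

/-- `y` solves `ẏ = F(y)` on `[0,T)`. -/
def SolOn {d : ℕ} (F : (Fin d → ℝ) → (Fin d → ℝ)) (y : ℝ → Fin d → ℝ) (T : ℝ≥0∞) : Prop :=
  ∀ t : ℝ, 0 ≤ t → ENNReal.ofReal t < T → HasDerivAt y (F (y t)) t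

/-- `y` is a maximal solution of `ẏ = F(y)`, with lifetime `T`: it is a solution on `[0,T)`
and no solution with the same initial value exists on a longer interval. -/
def IsMaxSol {d : ℕ} (F : (Fin d → ℝ) → (Fin d → ℝ)) (y : ℝ → Fin d → ℝ) (T : ℝ≥0∞) : Prop :=
  0 < T ∧ SolOn F y T ∧
    ∀ (z : ℝ → Fin d → ℝ) (T' : ℝ≥0∞), T < T' → SolOn F z T' → z 0 ≠ y 0

/-- Lyapunov stability of an equilibrium point. -/
def StablePt {d : ℕ} (F : (Fin d → ℝ) → (Fin d → ℝ)) (ν : Fin d → ℝ) : Prop :=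
  ∀ ε : ℝ, 0 < ε → ∃ δ : ℝ, 0 < δ ∧ ∀ (y : ℝ → Fin d → ℝ) (T : ℝ≥0∞),
    IsMaxSol F y T → ‖y 0 - ν‖ < δ →
      ∀ t : ℝ, 0 < t → ENNReal.ofReal t < T → ‖y t - ν‖ < ε

/-- Asymptotic stability of an equilibrium point. -/
def AsympStablePt {d : ℕ} (F : (Fin d → ℝ) → (Fin d → ℝ)) (ν : Fin d → ℝ) : Prop :=
  StablePt F ν ∧ ∃ δ : ℝ, 0 < δ ∧ ∀ (y : ℝ → Fin d → ℝ) (T : ℝ≥0∞),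
    IsMaxSol F y T → ‖y 0 - ν‖ < δ → T = ⊤ ∧ Filter.Tendsto y Filter.atTop (nhds ν)
section Aux

open Set Metric

variable {m n : ℕ} (I : Finset (Fin m)) (AV : Matrix (Fin m) (Fin m) ℝ)
  (pp : Fin m → Matrix (Fin n) (Fin n) ℝ) (AC : Matrix (Fin m) (Fin n) ℝ)
  (T : ℝ) (w : Fin n → ℝ)

/-- The sum `∑_{k ≤ i} AV i k * x (k.castSucc)`. -/
def mySf (AV : Matrix (Fin m) (Fin m) ℝ) (x : Fin (m + 1) → ℝ) (i : Fin m) : ℝ :=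
  ∑ k ∈ Finset.univ.filter (fun k : Fin m => k ≤ i), AV i k * x k.castSucc

lemma mySf_add (x y : Fin (m + 1) → ℝ) (i : Fin m) :
    mySf AV (x + y) i = mySf AV x i + mySf AV y i := by
  simp [mySf, mul_add, Finset.sum_add_distrib]

lemma Fq_castSucc (x : Fin (m + 1) → ℝ) (i : Fin m) :
    Fq I AV pp AC T w x i.castSucc =
      T / 2 * x i.castSucc ^ 2 * (if i ∈ I then 1 else 0) - x i.castSucc
        + T * mySf AV x i * x (Fin.last m)
        + T * x (Fin.last m) ^ 2 * gfun pp AC w i := by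
  have h : ((i.castSucc : Fin (m+1)) : ℕ) < m := i.is_lt
  have hmk : (⟨(i.castSucc : Fin (m+1)).1, h⟩ : Fin m) = i := by
    ext; simp
  rw [Fq, dif_pos h, hmk, mySf]

lemma Fq_last (x : Fin (m + 1) → ℝ) :
    Fq I AV pp AC T w x (Fin.last m) = -x (Fin.last m) := by
  rw [Fq, dif_neg (by simp)]

lemma myEquilChar (hT : 0 < T) (x : Fin (m + 1) → ℝ) :
    (∀ i, Fq I AV pp AC T w x i = 0) ↔
      (x (Fin.last m) = 0 ∧ ∀ i : Fin m,
        (i ∈ I → (x i.castSucc = 0 ∨ x i.castSucc = 2 / T)) ∧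
        (i ∉ I → x i.castSucc = 0)) := by
  constructor
  · intro hx
    have hlast : x (Fin.last m) = 0 := by
      have := hx (Fin.last m); rw [Fq_last] at this; linarith
    refine ⟨hlast, fun i => ?_⟩
    have hi := hx i.castSucc
    rw [Fq_castSucc, hlast] at hi
    constructor
    · intro hiI
      rw [if_pos hiI] at hi
      have h2 : x i.castSucc * (T / 2 * x i.castSucc - 1) = 0 := by ring_nf; ring_nf at hi; linarith
      rcases mul_eq_zero.1 h2 with h | h
      · exact Or.inl h
      · right
        have : T / 2 * x i.castSucc = 1 := by linarith
        field_simp at this ⊢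
        linarith
    · intro hiI
      rw [if_neg hiI] at hi
      nlinarith [hi]
  · rintro ⟨hlast, hco⟩ i
    refine Fin.lastCases ?_ (fun i => ?_) i
    · rw [Fq_last, hlast, neg_zero]
    · rw [Fq_castSucc, hlast]
      rcases hco i with ⟨h1, h2⟩
      by_cases hiI : i ∈ I
      · rw [if_pos hiI]
        rcases h1 hiI with h | h <;> rw [h]
        · ring
        · field_simp
          ring
      · rw [if_neg hiI, h2 hiI]
        ring

end Aux
section Aux2

open Set Metric

variable {m n : ℕ} (I : Finset (Fin m)) (AV : Matrix (Fin m) (Fin m) ℝ)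
  (pp : Fin m → Matrix (Fin n) (Fin n) ℝ) (AC : Matrix (Fin m) (Fin n) ℝ)
  (T : ℝ) (w : Fin n → ℝ)

def mySA (AV : Matrix (Fin m) (Fin m) ℝ) : ℝ := ∑ i, ∑ k, |AV i k|

def mySG (pp : Fin m → Matrix (Fin n) (Fin n) ℝ) (AC : Matrix (Fin m) (Fin n) ℝ)
    (w : Fin n → ℝ) : ℝ := ∑ i, |gfun pp AC w i|

def myCC (AV : Matrix (Fin m) (Fin m) ℝ) (pp : Fin m → Matrix (Fin n) (Fin n) ℝ)
    (AC : Matrix (Fin m) (Fin n) ℝ) (T : ℝ) (w : Fin n → ℝ) : ℝ :=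
  T / 2 + T * mySA AV + T * mySG pp AC w

lemma mySA_nonneg : 0 ≤ mySA AV :=
  Finset.sum_nonneg fun _ _ => Finset.sum_nonneg fun _ _ => abs_nonneg _

lemma mySG_nonneg : 0 ≤ mySG pp AC w := Finset.sum_nonneg fun _ _ => abs_nonneg _

lemma myCC_nonneg (hT : 0 < T) : 0 ≤ myCC AV pp AC T w := by
  have h1 := mySA_nonneg (AV := AV)
  have h2 := mySG_nonneg (pp := pp) (AC := AC) (w := w)
  have : 0 ≤ T * mySA AV := mul_nonneg hT.le h1
  have : 0 ≤ T * mySG pp AC w := mul_nonneg hT.le h2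
  unfold myCC; nlinarith

lemma abs_gfun_le (i : Fin m) : |gfun pp AC w i| ≤ mySG pp AC w :=
  Finset.single_le_sum (fun j (_ : j ∈ Finset.univ) => abs_nonneg (gfun pp AC w j))
    (Finset.mem_univ i)

lemma abs_rowsum_le (i : Fin m) : ∑ k, |AV i k| ≤ mySA AV :=
  Finset.single_le_sum (f := fun i => ∑ k, |AV i k|)
    (fun j (_ : j ∈ Finset.univ) => Finset.sum_nonneg fun _ _ => abs_nonneg _)
    (Finset.mem_univ i)

lemma abs_mySf_le (x : Fin (m + 1) → ℝ) (i : Fin m) :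
    |mySf AV x i| ≤ mySA AV * ‖x‖ := by
  calc |mySf AV x i| ≤ ∑ k ∈ Finset.univ.filter (fun k : Fin m => k ≤ i), |AV i k * x k.castSucc| :=
        Finset.abs_sum_le_sum_abs _ _
    _ ≤ ∑ k ∈ Finset.univ.filter (fun k : Fin m => k ≤ i), |AV i k| * ‖x‖ := by
        refine Finset.sum_le_sum fun k _ => ?_
        rw [abs_mul]
        exact mul_le_mul_of_nonneg_left ((Real.norm_eq_abs _ ▸ norm_le_pi_norm x k.castSucc))
          (abs_nonneg _)
    _ ≤ ∑ k, |AV i k| * ‖x‖ := by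
        refine Finset.sum_le_sum_of_subset_of_nonneg (Finset.filter_subset _ _) ?_
        intro k _ _; positivity
    _ = (∑ k, |AV i k|) * ‖x‖ := by rw [Finset.sum_mul]
    _ ≤ mySA AV * ‖x‖ := mul_le_mul_of_nonneg_right (abs_rowsum_le AV i) (norm_nonneg _)

/-- The key quadratic bound on the nonlinear part `N x = Fq x + x`. -/
lemma abs_N_le (hT : 0 < T) (x : Fin (m + 1) → ℝ) (i : Fin (m + 1)) :
    |Fq I AV pp AC T w x i + x i| ≤ myCC AV pp AC T w * ‖x‖ ^ 2 := by
  have hx : ∀ j, |x j| ≤ ‖x‖ := fun j => Real.norm_eq_abs (x j) ▸ norm_le_pi_norm x j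
  have hxn : 0 ≤ ‖x‖ := norm_nonneg _
  refine Fin.lastCases ?_ (fun i => ?_) i
  · rw [Fq_last]
    simp only [neg_add_cancel, abs_zero]
    have := myCC_nonneg AV pp AC T w hT
    positivity
  · rw [Fq_castSucc]
    have e1 : |T / 2 * x i.castSucc ^ 2 * (if i ∈ I then 1 else 0)| ≤ T / 2 * ‖x‖ ^ 2 := by
      rw [abs_mul, abs_mul]
      have h1 : |T / 2| = T / 2 := abs_of_pos (by linarith)
      have h2 : |x i.castSucc ^ 2| ≤ ‖x‖ ^ 2 := by
        rw [abs_pow]; exact pow_le_pow_left₀ (abs_nonneg _) (hx _) 2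
      have h3 : |(if i ∈ I then (1:ℝ) else 0)| ≤ 1 := by split <;> simp
      calc |T / 2| * |x i.castSucc ^ 2| * |(if i ∈ I then (1:ℝ) else 0)|
          ≤ |T / 2| * |x i.castSucc ^ 2| * 1 := by
            exact mul_le_mul_of_nonneg_left h3 (by positivity)
        _ = T / 2 * |x i.castSucc ^ 2| := by rw [h1, mul_one]
        _ ≤ T / 2 * ‖x‖ ^ 2 := mul_le_mul_of_nonneg_left h2 (by linarith)
    have e2 : |T * mySf AV x i * x (Fin.last m)| ≤ T * mySA AV * ‖x‖ ^ 2 := by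
      rw [abs_mul, abs_mul, abs_of_pos hT]
      have := abs_mySf_le AV x i
      have h4 := hx (Fin.last m)
      have h5 : 0 ≤ mySA AV := mySA_nonneg AV
      calc T * |mySf AV x i| * |x (Fin.last m)| ≤ T * (mySA AV * ‖x‖) * ‖x‖ := by
            apply mul_le_mul (mul_le_mul_of_nonneg_left this hT.le) h4 (abs_nonneg _)
            positivity
        _ = T * mySA AV * ‖x‖ ^ 2 := by ring
    have e3 : |T * x (Fin.last m) ^ 2 * gfun pp AC w i| ≤ T * mySG pp AC w * ‖x‖ ^ 2 := by
      rw [abs_mul, abs_mul, abs_of_pos hT, abs_pow]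
      have h6 : |x (Fin.last m)| ^ 2 ≤ ‖x‖ ^ 2 := pow_le_pow_left₀ (abs_nonneg _) (hx _) 2
      have h7 := abs_gfun_le pp AC w i
      calc T * |x (Fin.last m)| ^ 2 * |gfun pp AC w i|
          ≤ T * ‖x‖ ^ 2 * mySG pp AC w := by
            apply mul_le_mul (mul_le_mul_of_nonneg_left h6 hT.le) h7 (abs_nonneg _)
            positivity
        _ = T * mySG pp AC w * ‖x‖ ^ 2 := by ring
    calc |T / 2 * x i.castSucc ^ 2 * (if i ∈ I then 1 else 0) - x i.castSucc
          + T * mySf AV x i * x (Fin.last m)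
          + T * x (Fin.last m) ^ 2 * gfun pp AC w i + x i.castSucc|
        = |T / 2 * x i.castSucc ^ 2 * (if i ∈ I then 1 else 0)
          + T * mySf AV x i * x (Fin.last m)
          + T * x (Fin.last m) ^ 2 * gfun pp AC w i| := by ring_nf
      _ ≤ |T / 2 * x i.castSucc ^ 2 * (if i ∈ I then 1 else 0)
          + T * mySf AV x i * x (Fin.last m)| + |T * x (Fin.last m) ^ 2 * gfun pp AC w i| :=
          abs_add_le _ _
      _ ≤ |T / 2 * x i.castSucc ^ 2 * (if i ∈ I then 1 else 0)|
          + |T * mySf AV x i * x (Fin.last m)| + |T * x (Fin.last m) ^ 2 * gfun pp AC w i| := by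
          have := abs_add_le (T / 2 * x i.castSucc ^ 2 * (if i ∈ I then 1 else 0))
            (T * mySf AV x i * x (Fin.last m))
          linarith
      _ ≤ T / 2 * ‖x‖ ^ 2 + T * mySA AV * ‖x‖ ^ 2 + T * mySG pp AC w * ‖x‖ ^ 2 := by linarith
      _ = myCC AV pp AC T w * ‖x‖ ^ 2 := by rw [myCC]; ring

lemma norm_N_le (hT : 0 < T) (x : Fin (m + 1) → ℝ) :
    ‖Fq I AV pp AC T w x + x‖ ≤ myCC AV pp AC T w * ‖x‖ ^ 2 := by
  have h0 : 0 ≤ myCC AV pp AC T w * ‖x‖ ^ 2 := by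
    have := myCC_nonneg AV pp AC T w hT; positivity
  rw [pi_norm_le_iff_of_nonneg h0]
  intro i
  rw [Pi.add_apply, Real.norm_eq_abs]
  exact abs_N_le I AV pp AC T w hT x i

end Aux2
section Aux3

open Set Metric

variable {m n : ℕ} (I : Finset (Fin m)) (AV : Matrix (Fin m) (Fin m) ℝ)
  (pp : Fin m → Matrix (Fin n) (Fin n) ℝ) (AC : Matrix (Fin m) (Fin n) ℝ)
  (T : ℝ) (w : Fin n → ℝ)

/-- The Jacobian matrix of `Fq` at `p`. -/
def myJ (I : Finset (Fin m)) (AV : Matrix (Fin m) (Fin m) ℝ)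
    (pp : Fin m → Matrix (Fin n) (Fin n) ℝ) (AC : Matrix (Fin m) (Fin n) ℝ)
    (T : ℝ) (w : Fin n → ℝ) (p : Fin (m + 1) → ℝ) :
    Matrix (Fin (m + 1)) (Fin (m + 1)) ℝ :=
  fun i =>
    Fin.lastCases
      (fun j => if j = Fin.last m then (-1 : ℝ) else 0)
      (fun i' j =>
        Fin.lastCases
          (T * mySf AV p i' + 2 * T * p (Fin.last m) * gfun pp AC w i')
          (fun j' =>
            (if j' = i' then T * p i'.castSucc * (if i' ∈ I then 1 else 0) - 1 else 0)
              + (if j' ≤ i' then T * AV i' j' * p (Fin.last m) else 0))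
          j)
      i

lemma myJ_castSucc_castSucc (p : Fin (m + 1) → ℝ) (i j : Fin m) :
    myJ I AV pp AC T w p i.castSucc j.castSucc =
      (if j = i then T * p i.castSucc * (if i ∈ I then 1 else 0) - 1 else 0)
        + (if j ≤ i then T * AV i j * p (Fin.last m) else 0) := by
  simp [myJ]

lemma myJ_castSucc_last (p : Fin (m + 1) → ℝ) (i : Fin m) :
    myJ I AV pp AC T w p i.castSucc (Fin.last m) =
      T * mySf AV p i + 2 * T * p (Fin.last m) * gfun pp AC w i := by
  simp [myJ]

lemma myJ_last (p : Fin (m + 1) → ℝ) (j : Fin (m + 1)) :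
    myJ I AV pp AC T w p (Fin.last m) j = if j = Fin.last m then (-1 : ℝ) else 0 := by
  simp [myJ]

lemma myJ_mulVec_castSucc (p z : Fin (m + 1) → ℝ) (i : Fin m) :
    (myJ I AV pp AC T w p).mulVec z i.castSucc =
      (T * p i.castSucc * (if i ∈ I then 1 else 0) - 1) * z i.castSucc
        + (T * mySf AV p i + 2 * T * p (Fin.last m) * gfun pp AC w i) * z (Fin.last m)
        + T * p (Fin.last m) * mySf AV z i := by
  rw [Matrix.mulVec, dotProduct]
  rw [Fin.sum_univ_castSucc]
  rw [myJ_castSucc_last]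
  have : ∀ j : Fin m, myJ I AV pp AC T w p i.castSucc j.castSucc * z j.castSucc =
      (if j = i then (T * p i.castSucc * (if i ∈ I then 1 else 0) - 1) * z j.castSucc else 0)
        + (if j ≤ i then T * AV i j * p (Fin.last m) * z j.castSucc else 0) := by
    intro j
    rw [myJ_castSucc_castSucc, add_mul]
    congr 1 <;> split <;> ring
  rw [Finset.sum_congr rfl (fun j _ => this j), Finset.sum_add_distrib]
  rw [Finset.sum_ite_eq' Finset.univ i
    (fun j => (T * p i.castSucc * (if i ∈ I then 1 else 0) - 1) * z j.castSucc)]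
  simp only [Finset.mem_univ, if_true]
  rw [← Finset.sum_filter]
  have hsf : ∑ j ∈ Finset.univ.filter (fun j : Fin m => j ≤ i),
      T * AV i j * p (Fin.last m) * z j.castSucc = T * p (Fin.last m) * mySf AV z i := by
    rw [mySf, Finset.mul_sum]
    exact Finset.sum_congr rfl fun j _ => by ring
  rw [hsf]
  ring

lemma myJ_mulVec_last (p z : Fin (m + 1) → ℝ) :
    (myJ I AV pp AC T w p).mulVec z (Fin.last m) = -z (Fin.last m) := by
  rw [Matrix.mulVec, dotProduct]
  simp only [myJ_last]
  rw [Fin.sum_univ_castSucc]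
  have : ∀ j : Fin m, (if (j.castSucc : Fin (m+1)) = Fin.last m then (-1:ℝ) else 0) * z j.castSucc
      = 0 := by
    intro j; rw [if_neg (Fin.castSucc_lt_last j).ne, zero_mul]
  rw [Finset.sum_congr rfl (fun j _ => this j)]
  simp

/-- Exact first order expansion of `Fq`. -/
lemma myTaylor (p z : Fin (m + 1) → ℝ) (i : Fin (m + 1)) :
    Fq I AV pp AC T w (p + z) i =
      Fq I AV pp AC T w p i + (myJ I AV pp AC T w p).mulVec z i
        + (Fq I AV pp AC T w z i + z i) := by
  refine Fin.lastCases ?_ (fun i => ?_) i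
  · rw [Fq_last, Fq_last, Fq_last, myJ_mulVec_last, Pi.add_apply]
    ring
  · rw [Fq_castSucc, Fq_castSucc, Fq_castSucc, myJ_mulVec_castSucc, mySf_add,
      Pi.add_apply, Pi.add_apply]
    ring

lemma myHasFDerivAt (hT : 0 < T) (p : Fin (m + 1) → ℝ) :
    HasFDerivAt (fun x => Fq I AV pp AC T w x)
      (LinearMap.toContinuousLinearMap (Matrix.toLin' (myJ I AV pp AC T w p))) p := by
  rw [hasFDerivAt_iff_isLittleO_nhds_zero]
  have heq : (fun h : Fin (m+1) → ℝ => Fq I AV pp AC T w (p + h) - Fq I AV pp AC T w p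
      - LinearMap.toContinuousLinearMap (Matrix.toLin' (myJ I AV pp AC T w p)) h)
      = fun h => Fq I AV pp AC T w h + h := by
    funext h
    rw [LinearMap.coe_toContinuousLinearMap']
    funext i
    simp only [Pi.sub_apply, Pi.add_apply, Matrix.toLin'_apply]
    rw [myTaylor I AV pp AC T w p h i]
    ring
  rw [heq]
  rw [Asymptotics.isLittleO_iff]
  intro c hc
  have hCC := myCC_nonneg AV pp AC T w hT
  rw [Metric.eventually_nhds_iff]
  refine ⟨c / (myCC AV pp AC T w + 1), by positivity, fun {h} hh => ?_⟩
  have h1 : ‖Fq I AV pp AC T w h + h‖ ≤ myCC AV pp AC T w * ‖h‖ ^ 2 :=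
    norm_N_le I AV pp AC T w hT h
  have h2 : ‖h‖ < c / (myCC AV pp AC T w + 1) := by
    simpa [dist_zero_right] using hh
  have h3 : myCC AV pp AC T w * ‖h‖ ≤ c := by
    have hn : 0 ≤ ‖h‖ := norm_nonneg _
    have h4 : ‖h‖ * (myCC AV pp AC T w + 1) < c :=
      (lt_div_iff₀ (by positivity)).1 h2
    nlinarith
  calc ‖Fq I AV pp AC T w h + h‖ ≤ myCC AV pp AC T w * ‖h‖ ^ 2 := h1
    _ = (myCC AV pp AC T w * ‖h‖) * ‖h‖ := by ring
    _ ≤ c * ‖h‖ := mul_le_mul_of_nonneg_right h3 (norm_nonneg _)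

lemma myContinuous (hT : 0 < T) : Continuous (fun x => Fq I AV pp AC T w x) :=
  continuous_iff_continuousAt.2 fun p => (myHasFDerivAt I AV pp AC T w hT p).continuousAt

end Aux3
section Aux4

open Set Metric

variable {m n : ℕ} (I : Finset (Fin m)) (AV : Matrix (Fin m) (Fin m) ℝ)
  (pp : Fin m → Matrix (Fin n) (Fin n) ℝ) (AC : Matrix (Fin m) (Fin n) ℝ)
  (T : ℝ) (w : Fin n → ℝ)

/-- Bound for the operator norm of the Jacobian on the ball of radius `R`. -/
def myB (AV : Matrix (Fin m) (Fin m) ℝ) (pp : Fin m → Matrix (Fin n) (Fin n) ℝ)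
    (AC : Matrix (Fin m) (Fin n) ℝ) (T : ℝ) (w : Fin n → ℝ) (R : ℝ) : ℝ :=
  (T * R + 1) + (T * mySA AV * R + 2 * T * R * mySG pp AC w) + T * R * mySA AV

lemma myB_nonneg (hT : 0 < T) {R : ℝ} (hR : 0 ≤ R) : 0 ≤ myB AV pp AC T w R := by
  have h1 := mySA_nonneg (AV := AV)
  have h2 := mySG_nonneg (pp := pp) (AC := AC) (w := w)
  unfold myB
  have : 0 ≤ T * mySA AV * R := by positivity
  have : 0 ≤ 2 * T * R * mySG pp AC w := by positivity
  have : 0 ≤ T * R * mySA AV := by positivity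
  nlinarith

lemma myJ_mulVec_bound (hT : 0 < T) {R : ℝ} (hR : 0 ≤ R) (p : Fin (m + 1) → ℝ)
    (hp : ‖p‖ ≤ R) (z : Fin (m + 1) → ℝ) :
    ‖(myJ I AV pp AC T w p).mulVec z‖ ≤ myB AV pp AC T w R * ‖z‖ := by
  have h1 := mySA_nonneg (AV := AV)
  have h2 := mySG_nonneg (pp := pp) (AC := AC) (w := w)
  have hzn : 0 ≤ ‖z‖ := norm_nonneg _
  have hpj : ∀ j, |p j| ≤ R := fun j =>
    le_trans (Real.norm_eq_abs (p j) ▸ norm_le_pi_norm p j) hp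
  have hzj : ∀ j, |z j| ≤ ‖z‖ := fun j => Real.norm_eq_abs (z j) ▸ norm_le_pi_norm z j
  have hBpos : 0 ≤ myB AV pp AC T w R * ‖z‖ :=
    mul_nonneg (myB_nonneg AV pp AC T w hT hR) hzn
  rw [pi_norm_le_iff_of_nonneg hBpos]
  intro i
  rw [Real.norm_eq_abs]
  refine Fin.lastCases ?_ (fun i => ?_) i
  · rw [myJ_mulVec_last, abs_neg]
    calc |z (Fin.last m)| ≤ ‖z‖ := hzj _
      _ = 1 * ‖z‖ := (one_mul _).symm
      _ ≤ myB AV pp AC T w R * ‖z‖ := by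
        apply mul_le_mul_of_nonneg_right _ hzn
        unfold myB
        nlinarith [mul_nonneg hT.le hR, mul_nonneg (mul_nonneg hT.le h1) hR,
          mul_nonneg (mul_nonneg (mul_nonneg (by norm_num : (0:ℝ) ≤ 2) hT.le) hR) h2,
          mul_nonneg (mul_nonneg hT.le hR) h1]
  · rw [myJ_mulVec_castSucc]
    have e1 : |(T * p i.castSucc * (if i ∈ I then 1 else 0) - 1) * z i.castSucc|
        ≤ (T * R + 1) * ‖z‖ := by
      rw [abs_mul]
      apply mul_le_mul _ (hzj _) (abs_nonneg _) (by positivity)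
      calc |T * p i.castSucc * (if i ∈ I then 1 else 0) - 1|
          ≤ |T * p i.castSucc * (if i ∈ I then 1 else 0)| + 1 := by
            rw [sub_eq_add_neg]
            exact (abs_add_le _ _).trans (by simp)
        _ ≤ T * R + 1 := by
            have : |T * p i.castSucc * (if i ∈ I then 1 else 0)| ≤ T * R := by
              rw [abs_mul, abs_mul, abs_of_pos hT]
              have hif : |(if i ∈ I then (1:ℝ) else 0)| ≤ 1 := by split <;> simp
              calc T * |p i.castSucc| * |(if i ∈ I then (1:ℝ) else 0)|
                  ≤ T * R * 1 := by
                    apply mul_le_mul (mul_le_mul_of_nonneg_left (hpj _) hT.le) hif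
                      (abs_nonneg _) (by positivity)
                _ = T * R := mul_one _
            linarith
    have e2 : |(T * mySf AV p i + 2 * T * p (Fin.last m) * gfun pp AC w i) * z (Fin.last m)|
        ≤ (T * mySA AV * R + 2 * T * R * mySG pp AC w) * ‖z‖ := by
      rw [abs_mul]
      apply mul_le_mul _ (hzj _) (abs_nonneg _) (by positivity)
      calc |T * mySf AV p i + 2 * T * p (Fin.last m) * gfun pp AC w i|
          ≤ |T * mySf AV p i| + |2 * T * p (Fin.last m) * gfun pp AC w i| := abs_add_le _ _
        _ ≤ T * mySA AV * R + 2 * T * R * mySG pp AC w := by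
            have q1 : |T * mySf AV p i| ≤ T * mySA AV * R := by
              rw [abs_mul, abs_of_pos hT]
              calc T * |mySf AV p i| ≤ T * (mySA AV * ‖p‖) :=
                    mul_le_mul_of_nonneg_left (abs_mySf_le AV p i) hT.le
                _ ≤ T * (mySA AV * R) := by
                    apply mul_le_mul_of_nonneg_left _ hT.le
                    exact mul_le_mul_of_nonneg_left hp h1
                _ = T * mySA AV * R := by ring
            have q2 : |2 * T * p (Fin.last m) * gfun pp AC w i| ≤ 2 * T * R * mySG pp AC w := by
              rw [abs_mul, abs_mul]
              have h2T : |(2:ℝ) * T| = 2 * T := abs_of_pos (by linarith)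
              rw [h2T]
              apply mul_le_mul (mul_le_mul_of_nonneg_left (hpj _) (by linarith))
                (abs_gfun_le pp AC w i) (abs_nonneg _) (by positivity)
            linarith
    have e3 : |T * p (Fin.last m) * mySf AV z i| ≤ T * R * mySA AV * ‖z‖ := by
      rw [abs_mul, abs_mul, abs_of_pos hT]
      calc T * |p (Fin.last m)| * |mySf AV z i|
          ≤ T * R * (mySA AV * ‖z‖) := by
            apply mul_le_mul (mul_le_mul_of_nonneg_left (hpj _) hT.le) (abs_mySf_le AV z i)
              (abs_nonneg _) (by positivity)
        _ = T * R * mySA AV * ‖z‖ := by ring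
    calc |(T * p i.castSucc * (if i ∈ I then 1 else 0) - 1) * z i.castSucc
          + (T * mySf AV p i + 2 * T * p (Fin.last m) * gfun pp AC w i) * z (Fin.last m)
          + T * p (Fin.last m) * mySf AV z i|
        ≤ |(T * p i.castSucc * (if i ∈ I then 1 else 0) - 1) * z i.castSucc
          + (T * mySf AV p i + 2 * T * p (Fin.last m) * gfun pp AC w i) * z (Fin.last m)|
          + |T * p (Fin.last m) * mySf AV z i| := abs_add_le _ _
      _ ≤ |(T * p i.castSucc * (if i ∈ I then 1 else 0) - 1) * z i.castSucc|
          + |(T * mySf AV p i + 2 * T * p (Fin.last m) * gfun pp AC w i) * z (Fin.last m)|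
          + |T * p (Fin.last m) * mySf AV z i| := by
          have := abs_add_le ((T * p i.castSucc * (if i ∈ I then 1 else 0) - 1) * z i.castSucc)
            ((T * mySf AV p i + 2 * T * p (Fin.last m) * gfun pp AC w i) * z (Fin.last m))
          linarith
      _ ≤ (T * R + 1) * ‖z‖ + (T * mySA AV * R + 2 * T * R * mySG pp AC w) * ‖z‖
          + T * R * mySA AV * ‖z‖ := by linarith
      _ = myB AV pp AC T w R * ‖z‖ := by rw [myB]; ring

lemma myLipschitz (hT : 0 < T) {R : ℝ} (hR : 0 ≤ R) :
    LipschitzOnWith (Real.toNNReal (myB AV pp AC T w R)) (fun x => Fq I AV pp AC T w x)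
      (closedBall 0 R) := by
  refine Convex.lipschitzOnWith_of_nnnorm_hasFDerivWithin_le
    (f' := fun p => LinearMap.toContinuousLinearMap (Matrix.toLin' (myJ I AV pp AC T w p)))
    (fun x _ => (myHasFDerivAt I AV pp AC T w hT x).hasFDerivWithinAt) ?_
    (convex_closedBall 0 R)
  · intro x hx
    have hxR : ‖x‖ ≤ R := mem_closedBall_zero_iff.1 hx
    have hop : ‖LinearMap.toContinuousLinearMap (Matrix.toLin' (myJ I AV pp AC T w x))‖
        ≤ myB AV pp AC T w R := by
      apply ContinuousLinearMap.opNorm_le_bound _ (myB_nonneg AV pp AC T w hT hR)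
      intro z
      rw [LinearMap.coe_toContinuousLinearMap']
      rw [Matrix.toLin'_apply]
      exact myJ_mulVec_bound I AV pp AC T w hT hR x hxR z
    rw [← NNReal.coe_le_coe, coe_nnnorm, Real.coe_toNNReal _ (myB_nonneg AV pp AC T w hT hR)]
    exact hop

lemma myNormF_le (hT : 0 < T) {R : ℝ} (p : Fin (m + 1) → ℝ) (hp : ‖p‖ ≤ R) :
    ‖Fq I AV pp AC T w p‖ ≤ myCC AV pp AC T w * R ^ 2 + R := by
  have hR : 0 ≤ R := le_trans (norm_nonneg _) hp
  have hCC := myCC_nonneg AV pp AC T w hT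
  have h1 : ‖Fq I AV pp AC T w p‖ ≤ ‖Fq I AV pp AC T w p + p‖ + ‖p‖ := by
    have := norm_sub_le (Fq I AV pp AC T w p + p) p
    simpa using this
  have h2 := norm_N_le I AV pp AC T w hT p
  have h3 : myCC AV pp AC T w * ‖p‖ ^ 2 ≤ myCC AV pp AC T w * R ^ 2 := by
    apply mul_le_mul_of_nonneg_left _ hCC
    exact pow_le_pow_left₀ (norm_nonneg _) hp 2
  linarith

/-- Uniform-time local existence from any point in a ball of radius `r`. -/
lemma myLocalExist (hT : 0 < T) {r : ℝ} (hr : 0 ≤ r) :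
    ∃ ε : ℝ, 0 < ε ∧ ∀ x₀ : Fin (m + 1) → ℝ, ‖x₀‖ ≤ r → ∀ t1 : ℝ,
      ∃ z : ℝ → Fin (m + 1) → ℝ, z t1 = x₀ ∧ ∀ t ∈ Icc (t1 - ε) (t1 + ε),
        HasDerivWithinAt z (Fq I AV pp AC T w (z t)) (Icc (t1 - ε) (t1 + ε)) t := by
  set C : ℝ := myCC AV pp AC T w * (r + 1) ^ 2 + (r + 1) with hC
  have hCC := myCC_nonneg AV pp AC T w hT
  have hCpos : 0 ≤ C := by positivity
  refine ⟨1 / (C + 1), by positivity, fun x₀ hx₀ t1 => ?_⟩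
  have hpl : IsPicardLindelof (fun _ x => Fq I AV pp AC T w x) (tmin := t1 - 1 / (C + 1))
      (tmax := t1 + 1 / (C + 1))
      ⟨t1, by constructor <;> linarith [one_div_pos.2 (by positivity : (0:ℝ) < C + 1)]⟩
      x₀ 1 0 (Real.toNNReal C) (Real.toNNReal (myB AV pp AC T w (r + 1))) := by
    apply IsPicardLindelof.of_time_independent
    · intro x hx
      rw [mem_closedBall, NNReal.coe_one] at hx
      rw [Real.coe_toNNReal _ hCpos]
      have : ‖x‖ ≤ r + 1 := by
        calc ‖x‖ = ‖x - x₀ + x₀‖ := by ring_nf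
          _ ≤ ‖x - x₀‖ + ‖x₀‖ := norm_add_le _ _
          _ ≤ 1 + r := add_le_add (by rwa [← dist_eq_norm]) hx₀
          _ = r + 1 := by ring
      exact myNormF_le I AV pp AC T w hT x this
    · have hsub : closedBall x₀ 1 ⊆ closedBall (0 : Fin (m+1) → ℝ) (r + 1) := by
        intro y hy
        rw [mem_closedBall_zero_iff]
        have : dist y x₀ ≤ 1 := mem_closedBall.1 hy
        calc ‖y‖ = ‖y - x₀ + x₀‖ := by ring_nf
          _ ≤ ‖y - x₀‖ + ‖x₀‖ := norm_add_le _ _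
          _ ≤ 1 + r := add_le_add (by rwa [← dist_eq_norm]) hx₀
          _ = r + 1 := by ring
      rw [NNReal.coe_one]
      exact (myLipschitz I AV pp AC T w hT (by linarith : (0:ℝ) ≤ r + 1)).mono hsub
    · have : max (t1 + 1 / (C + 1) - t1) (t1 - (t1 - 1 / (C + 1))) = 1 / (C + 1) := by
        norm_num
      simp only [NNReal.coe_one, NNReal.coe_zero, sub_zero, tsub_zero,
        Real.coe_toNNReal _ hCpos]
      rw [this, mul_one_div, div_le_one (by positivity : (0:ℝ) < C + 1)]
      linarith
  obtain ⟨z, hz0, hz⟩ := hpl.exists_eq_forall_mem_Icc_hasDerivWithinAt₀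
  exact ⟨z, hz0, hz⟩

end Aux4
section Aux5

open Set Metric

variable {m n : ℕ} (I : Finset (Fin m)) (AV : Matrix (Fin m) (Fin m) ℝ)
  (pp : Fin m → Matrix (Fin n) (Fin n) ℝ) (AC : Matrix (Fin m) (Fin n) ℝ)
  (T : ℝ) (w : Fin n → ℝ)

def myR0 (AV : Matrix (Fin m) (Fin m) ℝ) (pp : Fin m → Matrix (Fin n) (Fin n) ℝ)
    (AC : Matrix (Fin m) (Fin n) ℝ) (T : ℝ) (w : Fin n → ℝ) : ℝ :=
  1 / (2 * (myCC AV pp AC T w + 1))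

lemma myR0_pos (hT : 0 < T) : 0 < myR0 AV pp AC T w := by
  have := myCC_nonneg AV pp AC T w hT
  unfold myR0; positivity

lemma myCC_mul_myR0 (hT : 0 < T) : myCC AV pp AC T w * myR0 AV pp AC T w ≤ 1 / 2 := by
  have h := myCC_nonneg AV pp AC T w hT
  rw [myR0, mul_one_div, div_le_div_iff₀ (by positivity) (by norm_num)]
  nlinarith

/-- Gronwall-type estimate assuming trajectory stays in the small ball. -/
lemma myGron (hT : 0 < T) (y : ℝ → Fin (m + 1) → ℝ) (b : ℝ) (hb : 0 ≤ b)
    (hy : ∀ t ∈ Icc 0 b, HasDerivAt y (Fq I AV pp AC T w (y t)) t)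
    (hsmall : ∀ t ∈ Ico 0 b, ‖y t‖ ≤ myR0 AV pp AC T w) :
    ∀ t ∈ Icc 0 b, ‖y t‖ ≤ ‖y 0‖ * Real.exp (-(1 / 2) * t) := by
  set u : ℝ → Fin (m + 1) → ℝ := fun t => Real.exp t • y t with hu
  have hcont : ContinuousOn u (Icc 0 b) := by
    apply ContinuousOn.smul (Real.continuous_exp.continuousOn)
    exact fun t ht => ((hy t ht).continuousAt).continuousWithinAt
  have hderiv : ∀ t ∈ Ico 0 b, HasDerivWithinAt u
      (Real.exp t • (Fq I AV pp AC T w (y t) + y t)) (Ici t) t := by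
    intro t ht
    have h1 : HasDerivAt u (Real.exp t • Fq I AV pp AC T w (y t) + Real.exp t • y t) t :=
      (Real.hasDerivAt_exp t).smul (hy t ⟨ht.1, ht.2.le⟩)
    have h2 : Real.exp t • Fq I AV pp AC T w (y t) + Real.exp t • y t
        = Real.exp t • (Fq I AV pp AC T w (y t) + y t) := by rw [smul_add]
    rw [h2] at h1
    exact h1.hasDerivWithinAt
  have hbound : ∀ t ∈ Ico 0 b, ‖Real.exp t • (Fq I AV pp AC T w (y t) + y t)‖
      ≤ (1 / 2) * ‖u t‖ + 0 := by
    intro t ht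
    rw [norm_smul, Real.norm_eq_abs, Real.abs_exp, add_zero]
    have h1 := norm_N_le I AV pp AC T w hT (y t)
    have h2 : ‖u t‖ = Real.exp t * ‖y t‖ := by
      rw [hu]; rw [norm_smul, Real.norm_eq_abs, Real.abs_exp]
    rw [h2]
    have h3 : ‖Fq I AV pp AC T w (y t) + y t‖ ≤ (1 / 2) * ‖y t‖ := by
      have h4 : myCC AV pp AC T w * ‖y t‖ ^ 2 ≤ (1 / 2) * ‖y t‖ := by
        have h5 := hsmall t ht
        have h6 := myCC_nonneg AV pp AC T w hT
        have h7 := norm_nonneg (y t)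
        have h8 := myCC_mul_myR0 AV pp AC T w hT
        calc myCC AV pp AC T w * ‖y t‖ ^ 2 = (myCC AV pp AC T w * ‖y t‖) * ‖y t‖ := by ring
          _ ≤ (myCC AV pp AC T w * myR0 AV pp AC T w) * ‖y t‖ :=
              mul_le_mul_of_nonneg_right (mul_le_mul_of_nonneg_left h5 h6) h7
          _ ≤ (1 / 2) * ‖y t‖ := mul_le_mul_of_nonneg_right h8 h7
      linarith
    have := Real.exp_pos t
    calc Real.exp t * ‖Fq I AV pp AC T w (y t) + y t‖ ≤ Real.exp t * ((1 / 2) * ‖y t‖) :=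
          mul_le_mul_of_nonneg_left h3 this.le
      _ = 1 / 2 * (Real.exp t * ‖y t‖) := by ring
  have hgron := norm_le_gronwallBound_of_norm_deriv_right_le hcont hderiv
    (le_refl ‖u 0‖) hbound
  intro t ht
  have h9 := hgron t ht
  rw [gronwallBound_ε0] at h9
  have h10 : ‖u 0‖ = ‖y 0‖ := by rw [hu]; simp
  have h11 : ‖u t‖ = Real.exp t * ‖y t‖ := by
    rw [hu]; rw [norm_smul, Real.norm_eq_abs, Real.abs_exp]
  rw [h10, h11, sub_zero] at h9
  have h12 : Real.exp t * ‖y t‖ ≤ ‖y 0‖ * Real.exp (1 / 2 * t) := h9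
  have hexp := Real.exp_pos t
  rw [← sub_nonneg]
  have h13 : ‖y 0‖ * Real.exp (-(1 / 2) * t) * Real.exp t = ‖y 0‖ * Real.exp (1 / 2 * t) := by
    rw [mul_assoc, ← Real.exp_add]; ring_nf
  nlinarith [h13, h12, norm_nonneg (y t)]

/-- Decay estimate: small initial data stays small and decays. -/
lemma myDecay (hT : 0 < T) (y : ℝ → Fin (m + 1) → ℝ) (b : ℝ) (hb : 0 ≤ b)
    (hy : ∀ t ∈ Icc 0 b, HasDerivAt y (Fq I AV pp AC T w (y t)) t)
    (h0 : ‖y 0‖ ≤ myR0 AV pp AC T w / 2) :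
    ∀ t ∈ Icc 0 b, ‖y t‖ ≤ ‖y 0‖ * Real.exp (-(1 / 2) * t) := by
  have hr0 := myR0_pos AV pp AC T w hT
  -- first: the trajectory never reaches norm `myR0`
  have hstay : ∀ t ∈ Icc 0 b, ‖y t‖ < myR0 AV pp AC T w := by
    by_contra hcon
    push_neg at hcon
    obtain ⟨t₁, ht₁, ht₁'⟩ := hcon
    set S : Set ℝ := {t | t ∈ Icc 0 b ∧ myR0 AV pp AC T w ≤ ‖y t‖} with hS
    have hconty : ContinuousOn (fun t => ‖y t‖) (Icc 0 b) :=
      fun t ht => (((hy t ht).continuousAt).norm).continuousWithinAt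
    have hSclosed : IsClosed S := by
      have hSeq : S = Icc 0 b ∩ (fun t => ‖y t‖) ⁻¹' (Ici (myR0 AV pp AC T w)) := rfl
      rw [hSeq]
      exact ContinuousOn.preimage_isClosed_of_isClosed hconty isClosed_Icc isClosed_Ici
    have hSne : S.Nonempty := ⟨t₁, ht₁, ht₁'⟩
    have hSbdd : BddBelow S := ⟨0, fun t ht => ht.1.1⟩
    set c := sInf S with hc
    have hcS : c ∈ S := hSclosed.csInf_mem hSne hSbdd
    have hcpos : 0 < c := by
      rcases hcS.1.1.lt_or_eq with h | h
      · exact h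
      · exfalso
        have h2' : myR0 AV pp AC T w ≤ ‖y 0‖ := by rw [h]; exact hcS.2
        linarith
    have hlt : ∀ t ∈ Ico 0 c, ‖y t‖ ≤ myR0 AV pp AC T w := by
      intro t ht
      by_contra hcon2
      push_neg at hcon2
      have htS : t ∈ S := ⟨⟨ht.1, le_trans ht.2.le hcS.1.2⟩, hcon2.le⟩
      have := csInf_le hSbdd htS
      linarith [ht.2]
    have hgr := myGron I AV pp AC T w hT y c hcpos.le
      (fun t ht => hy t ⟨ht.1, le_trans ht.2 hcS.1.2⟩) hlt
    have h14 := hgr c ⟨hcpos.le, le_refl c⟩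
    have h15 : Real.exp (-(1 / 2) * c) ≤ 1 := by
      rw [Real.exp_le_one_iff]
      nlinarith
    have h16 : ‖y c‖ ≤ ‖y 0‖ := by
      calc ‖y c‖ ≤ ‖y 0‖ * Real.exp (-(1 / 2) * c) := h14
        _ ≤ ‖y 0‖ * 1 := mul_le_mul_of_nonneg_left h15 (norm_nonneg _)
        _ = ‖y 0‖ := mul_one _
    have := hcS.2
    linarith
  exact myGron I AV pp AC T w hT y b hb hy fun t ht => (hstay t ⟨ht.1, ht.2.le⟩).le

end Aux5
section Aux6

open Set Metric Filter

variable {m n : ℕ} (I : Finset (Fin m)) (AV : Matrix (Fin m) (Fin m) ℝ)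
  (pp : Fin m → Matrix (Fin n) (Fin n) ℝ) (AC : Matrix (Fin m) (Fin n) ℝ)
  (T : ℝ) (w : Fin n → ℝ)

lemma mySolOn_Icc {y : ℝ → Fin (m + 1) → ℝ} {T' : ℝ≥0∞}
    (hy : SolOn (fun z => Fq I AV pp AC T w z) y T') {b : ℝ}
    (hb : ENNReal.ofReal b < T') :
    ∀ t ∈ Icc 0 b, HasDerivAt y (Fq I AV pp AC T w (y t)) t := fun t ht =>
  hy t ht.1 (lt_of_le_of_lt (ENNReal.ofReal_le_ofReal ht.2) hb)

lemma myStable (hT : 0 < T) : StablePt (fun z => Fq I AV pp AC T w z) 0 := by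
  intro ε hε
  have hr0 := myR0_pos AV pp AC T w hT
  refine ⟨min (myR0 AV pp AC T w / 2) ε, by positivity, ?_⟩
  intro y T' hmax hnear t ht htT
  rw [sub_zero] at hnear ⊢
  have hy := mySolOn_Icc I AV pp AC T w hmax.2.1 htT
  have hdec := myDecay I AV pp AC T w hT y t ht.le hy
    (le_trans hnear.le (le_trans (min_le_left _ _) (le_refl _)))
  have h1 := hdec t ⟨ht.le, le_refl t⟩
  have h2 : Real.exp (-(1 / 2) * t) ≤ 1 := by
    rw [Real.exp_le_one_iff]; nlinarith
  calc ‖y t‖ ≤ ‖y 0‖ * Real.exp (-(1 / 2) * t) := h1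
    _ ≤ ‖y 0‖ * 1 := mul_le_mul_of_nonneg_left h2 (norm_nonneg _)
    _ = ‖y 0‖ := mul_one _
    _ < min (myR0 AV pp AC T w / 2) ε := hnear
    _ ≤ ε := min_le_right _ _

lemma myGlobal (hT : 0 < T) {y : ℝ → Fin (m + 1) → ℝ} {T' : ℝ≥0∞}
    (hmax : IsMaxSol (fun z => Fq I AV pp AC T w z) y T')
    (hnear : ‖y 0‖ < myR0 AV pp AC T w / 2) : T' = ⊤ := by
  by_contra hne
  have hr0 := myR0_pos AV pp AC T w hT
  set τ := T'.toReal with hτ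
  have hτpos : 0 < τ := ENNReal.toReal_pos (ne_of_gt hmax.1) hne
  have hT'eq : T' = ENNReal.ofReal τ := (ENNReal.ofReal_toReal hne).symm
  obtain ⟨ε, hε, hloc⟩ := myLocalExist I AV pp AC T w hT hr0.le
  rcases le_or_gt τ (ε / 2) with hcase | hcase
  · -- short lifetime: a solution from `y 0` on `(-ε, ε)` already beats it
    obtain ⟨z, hz0, hz⟩ := hloc (y 0) (by linarith) 0
    have hsol : SolOn (fun z => Fq I AV pp AC T w z) z (ENNReal.ofReal ε) := by
      intro t ht0 htε
      rw [ENNReal.ofReal_lt_ofReal_iff hε] at htε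
      have := hz t ⟨by linarith, by linarith⟩
      rw [zero_sub, zero_add] at this
      exact this.hasDerivAt (Icc_mem_nhds (by linarith) (by linarith))
    exact hmax.2.2 z (ENNReal.ofReal ε)
      (by rw [hT'eq]; exact (ENNReal.ofReal_lt_ofReal_iff hε).2 (by linarith)) hsol hz0
  · -- long lifetime: extend `y` past `τ`
    set t1 := τ - ε / 2 with ht1
    have ht1pos : 0 < t1 := by simp only [ht1]; linarith
    have ht1τ : t1 < τ := by simp only [ht1]; linarith
    have hyIcc : ∀ b, 0 ≤ b → b < τ →
        ∀ t ∈ Icc 0 b, HasDerivAt y (Fq I AV pp AC T w (y t)) t := by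
      intro b hb hbτ
      apply mySolOn_Icc I AV pp AC T w hmax.2.1
      rw [hT'eq]
      exact (ENNReal.ofReal_lt_ofReal_iff hτpos).2 hbτ
    have hyt1 : ‖y t1‖ ≤ myR0 AV pp AC T w := by
      have hdec := myDecay I AV pp AC T w hT y t1 ht1pos.le (hyIcc t1 ht1pos.le ht1τ)
        (by linarith)
      have h1 := hdec t1 ⟨ht1pos.le, le_refl t1⟩
      have h2 : Real.exp (-(1 / 2) * t1) ≤ 1 := by
        rw [Real.exp_le_one_iff]; nlinarith
      calc ‖y t1‖ ≤ ‖y 0‖ * Real.exp (-(1 / 2) * t1) := h1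
        _ ≤ ‖y 0‖ * 1 := mul_le_mul_of_nonneg_left h2 (norm_nonneg _)
        _ ≤ myR0 AV pp AC T w := by rw [mul_one]; linarith
    obtain ⟨z, hz0, hz⟩ := hloc (y t1) hyt1 t1
    set Y : ℝ → Fin (m + 1) → ℝ := fun t => if t ≤ t1 then y t else z t with hY
    have hY0 : Y 0 = y 0 := by simp only [hY, if_pos ht1pos.le]
    have hYt1 : Y t1 = y t1 := by simp only [hY, if_pos (le_refl t1)]
    have hsol : SolOn (fun z => Fq I AV pp AC T w z) Y (ENNReal.ofReal (t1 + ε)) := by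
      intro t ht0 htε
      rw [ENNReal.ofReal_lt_ofReal_iff (by linarith)] at htε
      rcases lt_trichotomy t t1 with hlt | heq | hgt
      · have hyd : HasDerivAt y (Fq I AV pp AC T w (y t)) t :=
          hyIcc t ht0 (by linarith) t ⟨ht0, le_refl t⟩
        have hYy : Y =ᶠ[nhds t] y :=
          Filter.eventuallyEq_of_mem (Iio_mem_nhds hlt) fun s hs => by
            simp only [hY, if_pos (le_of_lt (mem_Iio.1 hs))]
        have : HasDerivAt Y (Fq I AV pp AC T w (y t)) t := hyd.congr_of_eventuallyEq hYy
        have hYt : Y t = y t := by simp only [hY, if_pos hlt.le]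
        rwa [← hYt] at this
      · rw [heq]
        have hyd : HasDerivAt y (Fq I AV pp AC T w (y t1)) t1 :=
          hyIcc t1 ht1pos.le ht1τ t1 ⟨ht1pos.le, le_refl t1⟩
        have hL : HasDerivWithinAt Y (Fq I AV pp AC T w (y t1)) (Iic t1) t1 :=
          (hyd.hasDerivWithinAt).congr (fun s hs => by simp only [hY, if_pos (mem_Iic.1 hs)])
            (by simp only [hY, if_pos (le_refl t1)])
        have hzd := hz t1 ⟨by linarith, by linarith⟩
        have hzd2 : HasDerivWithinAt z (Fq I AV pp AC T w (y t1)) (Icc t1 (t1 + ε)) t1 := by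
          rw [← hz0]
          exact (hzd.mono (Icc_subset_Icc (by linarith) (le_refl _)))
        have hR : HasDerivWithinAt Y (Fq I AV pp AC T w (y t1)) (Icc t1 (t1 + ε)) t1 := by
          apply hzd2.congr
          · intro s hs
            rcases le_or_gt s t1 with h | h
            · have hst : s = t1 := le_antisymm h hs.1
              rw [hst]
              simp only [hY, if_pos (le_refl t1)]
              exact hz0.symm
            · simp only [hY, if_neg (not_le.2 h)]
          · simp only [hY, if_pos (le_refl t1)]
            exact hz0.symm
        have hunion := hL.union hR
        have hset : Iic t1 ∪ Icc t1 (t1 + ε) = Iic (t1 + ε) := by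
          ext s
          simp only [mem_union, mem_Iic, mem_Icc]
          constructor
          · rintro (h | ⟨h1, h2⟩)
            · linarith
            · exact h2
          · intro h
            rcases le_or_gt s t1 with h' | h'
            · exact Or.inl h'
            · exact Or.inr ⟨h'.le, h⟩
        rw [hset] at hunion
        have hda := hunion.hasDerivAt (Iic_mem_nhds (by linarith))
        show HasDerivAt Y (Fq I AV pp AC T w (Y t1)) t1
        rwa [hYt1]
      · have hzd := hz t ⟨by linarith, by linarith⟩
        have hza : HasDerivAt z (Fq I AV pp AC T w (z t)) t :=
          hzd.hasDerivAt (Icc_mem_nhds (by linarith) (by linarith))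
        have hYz : Y =ᶠ[nhds t] z :=
          Filter.eventuallyEq_of_mem (Ioi_mem_nhds hgt) fun s hs =>  by
            simp only [hY, if_neg (not_le.2 (mem_Ioi.1 hs))]
        have : HasDerivAt Y (Fq I AV pp AC T w (z t)) t := hza.congr_of_eventuallyEq hYz
        have hYt : Y t = z t := by simp only [hY, if_neg (not_le.2 hgt)]
        rwa [← hYt] at this
    refine hmax.2.2 Y (ENNReal.ofReal (t1 + ε)) ?_ hsol hY0
    rw [hT'eq]
    exact (ENNReal.ofReal_lt_ofReal_iff (by linarith)).2 (by simp only [ht1]; linarith)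

lemma myOriginAsymp (hT : 0 < T) :
    AsympStablePt (fun z => Fq I AV pp AC T w z) 0 := by
  have hr0 := myR0_pos AV pp AC T w hT
  refine ⟨myStable I AV pp AC T w hT, myR0 AV pp AC T w / 2, by positivity, ?_⟩
  intro y T' hmax hnear
  rw [sub_zero] at hnear
  have hTtop : T' = ⊤ := myGlobal I AV pp AC T w hT hmax hnear
  refine ⟨hTtop, ?_⟩
  have hy : ∀ t, 0 ≤ t → HasDerivAt y (Fq I AV pp AC T w (y t)) t := by
    intro t ht
    exact hmax.2.1 t ht (by rw [hTtop]; exact ENNReal.ofReal_lt_top)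
  have hdecay : ∀ t, 0 ≤ t → ‖y t‖ ≤ ‖y 0‖ * Real.exp (-(1 / 2) * t) := by
    intro t ht
    exact myDecay I AV pp AC T w hT y t ht (fun s hs => hy s hs.1) hnear.le t ⟨ht, le_refl t⟩
  have hg : Tendsto (fun t : ℝ => ‖y 0‖ * Real.exp (-(1 / 2) * t)) atTop (nhds 0) := by
    have h1 : Tendsto (fun t : ℝ => -(1 / 2) * t) atTop atBot :=
      Filter.Tendsto.const_mul_atTop_of_neg (by norm_num) tendsto_id
    have h2 : Tendsto (fun t : ℝ => Real.exp (-(1 / 2) * t)) atTop (nhds 0) :=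
      Real.tendsto_exp_atBot.comp h1
    have h3 := h2.const_mul (‖y 0‖)
    rwa [mul_zero] at h3
  exact squeeze_zero_norm' (Filter.eventually_atTop.2 ⟨0, fun t ht => hdecay t ht⟩) hg

end Aux6
section Aux7

open Set Metric

variable {m n : ℕ} (I : Finset (Fin m)) (AV : Matrix (Fin m) (Fin m) ℝ)
  (pp : Fin m → Matrix (Fin n) (Fin n) ℝ) (AC : Matrix (Fin m) (Fin n) ℝ)
  (T : ℝ) (w : Fin n → ℝ)

lemma myJ_triangular (hT : 0 < T) (x : Fin (m + 1) → ℝ)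
    (hlast : x (Fin.last m) = 0) :
    ∀ i j : Fin (m + 1), (j : ℕ) < (i : ℕ) → myJ I AV pp AC T w x i j = 0 := by
  intro i j hij
  induction i using Fin.lastCases with
  | last =>
    rw [myJ_last, if_neg]
    intro hj
    rw [hj] at hij
    exact lt_irrefl _ hij
  | cast i' =>
    have hi' : (i'.castSucc : ℕ) = (i' : ℕ) := rfl
    induction j using Fin.lastCases with
    | last =>
      exfalso
      have h1 : (Fin.last m : ℕ) = m := rfl
      have h2 : (i' : ℕ) < m := i'.is_lt
      rw [h1, hi'] at hij
      omega
    | cast j' =>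
      rw [myJ_castSucc_castSucc]
      have hne : j' ≠ i' := by
        intro h
        rw [h] at hij
        exact lt_irrefl _ hij
      rw [if_neg hne, hlast]
      simp

lemma myJ_diag (hT : 0 < T) (x : Fin (m + 1) → ℝ)
    (hx : ∀ i, Fq I AV pp AC T w x i = 0) :
    ∀ i : Fin (m + 1), myJ I AV pp AC T w x i i = 1 ∨ myJ I AV pp AC T w x i i = -1 := by
  obtain ⟨hlast, hco⟩ := (myEquilChar I AV pp AC T w hT x).1 hx
  intro i
  refine Fin.lastCases ?_ (fun i' => ?_) i
  · rw [myJ_last, if_pos rfl]; right; rfl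
  · rw [myJ_castSucc_castSucc, if_pos rfl, if_pos (le_refl i'), hlast, mul_zero, add_zero]
    by_cases hiI : i' ∈ I
    · rw [if_pos hiI]
      rcases (hco i').1 hiI with h | h
      · rw [h]; right; ring
      · rw [h]; left; field_simp; norm_num
    · rw [if_neg hiI]
      rw [(hco i').2 hiI]; right; ring

lemma mySpectrum (hT : 0 < T) (x : Fin (m + 1) → ℝ)
    (hx : ∀ i, Fq I AV pp AC T w x i = 0) :
    ∀ μ ∈ spectrum ℂ
      ((LinearMap.toMatrix'
        (fderiv ℝ (fun z => Fq I AV pp AC T w z) x).toLinearMap).map Complex.ofReal),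
      μ = 1 ∨ μ = -1 := by
  obtain ⟨hlast, _⟩ := (myEquilChar I AV pp AC T w hT x).1 hx
  have hfd : fderiv ℝ (fun z => Fq I AV pp AC T w z) x
      = LinearMap.toContinuousLinearMap (Matrix.toLin' (myJ I AV pp AC T w x)) :=
    (myHasFDerivAt I AV pp AC T w hT x).fderiv
  have hmat : (LinearMap.toMatrix'
      (fderiv ℝ (fun z => Fq I AV pp AC T w z) x).toLinearMap) = myJ I AV pp AC T w x := by
    rw [hfd]
    have : (LinearMap.toContinuousLinearMap
        (Matrix.toLin' (myJ I AV pp AC T w x))).toLinearMap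
        = Matrix.toLin' (myJ I AV pp AC T w x) := by
      ext z
      simp
    rw [this, LinearMap.toMatrix'_toLin']
  rw [hmat]
  intro μ hμ
  have hM' : True := trivial
  set M' : Matrix (Fin (m + 1)) (Fin (m + 1)) ℂ
    := algebraMap ℂ (Matrix (Fin (m + 1)) (Fin (m + 1)) ℂ) μ
        - (myJ I AV pp AC T w x).map Complex.ofReal with hMdef
  rw [spectrum.mem_iff] at hμ
  have hdet : M'.det = 0 := by
    by_contra hd
    exact hμ ((Matrix.isUnit_iff_isUnit_det M').2 (isUnit_iff_ne_zero.2 hd))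
  have htri : M'.BlockTriangular id := by
    intro i j hij
    rw [hMdef, Matrix.sub_apply, Matrix.algebraMap_matrix_apply, if_neg (by
      intro h; rw [h] at hij; exact lt_irrefl _ hij), Matrix.map_apply]
    rw [myJ_triangular I AV pp AC T w hT x hlast i j hij]
    simp
  have hprod := Matrix.det_of_upperTriangular htri
  rw [hprod] at hdet
  obtain ⟨i, _, hzero⟩ := Finset.prod_eq_zero_iff.1 hdet
  have hdiag : M' i i = μ - Complex.ofReal (myJ I AV pp AC T w x i i) := by
    rw [hMdef, Matrix.sub_apply, Matrix.algebraMap_matrix_apply, if_pos rfl, Matrix.map_apply]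
    norm_num
  rw [hdiag, sub_eq_zero] at hzero
  rcases myJ_diag I AV pp AC T w hT x hx i with h | h <;> rw [h] at hzero
  · left; rw [hzero]; norm_num
  · right; rw [hzero]; norm_num

end Aux7
section Aux8

open Set Metric Filter

variable {m n : ℕ} (I : Finset (Fin m)) (AV : Matrix (Fin m) (Fin m) ℝ)
  (pp : Fin m → Matrix (Fin n) (Fin n) ℝ) (AC : Matrix (Fin m) (Fin n) ℝ)
  (T : ℝ) (w : Fin n → ℝ)

lemma myUnique (hT : 0 < T) (x : Fin (m + 1) → ℝ)
    (hx : ∀ i, Fq I AV pp AC T w x i = 0)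
    (hs : AsympStablePt (fun z => Fq I AV pp AC T w z) x) : x = 0 := by
  obtain ⟨hlast, hco⟩ := (myEquilChar I AV pp AC T w hT x).1 hx
  by_contra hne
  -- there is a coordinate equal to 2/T
  have hex : ∃ j : Fin m, j ∈ I ∧ x j.castSucc = 2 / T := by
    by_contra hnj
    push_neg at hnj
    apply hne
    funext i
    rw [Pi.zero_apply]
    induction i using Fin.lastCases with
    | last => exact hlast
    | cast i' =>
      by_cases hiI : i' ∈ I
      · rcases (hco i').1 hiI with h | h
        · exact h
        · exact absurd h (hnj i' hiI)
      · exact (hco i').2 hiI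
  obtain ⟨j, hjI, hjx⟩ := hex
  obtain ⟨hstab, δ, hδ, hprop⟩ := hs
  -- set up the scalar blow-up solution
  obtain ⟨η, hη⟩ : ∃ η : ℝ, η = δ / 2 := ⟨_, rfl⟩
  have hηpos : 0 < η := by rw [hη]; positivity
  obtain ⟨y0, hy0def⟩ : ∃ y0 : ℝ, y0 = 2 / T + η := ⟨_, rfl⟩
  have h2T : 0 < 2 / T := div_pos two_pos hT
  have hy0pos : 0 < y0 := by rw [hy0def]; linarith
  obtain ⟨c, hcdef⟩ : ∃ c : ℝ, c = T / 2 - 1 / y0 := ⟨_, rfl⟩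
  have hTy0 : T * y0 = 2 + T * η := by
    rw [hy0def]; field_simp
  have hcpos : 0 < c := by
    have h1 : 1 / y0 < T / 2 := by
      rw [div_lt_div_iff₀ hy0pos (by norm_num : (0:ℝ) < 2)]
      nlinarith
    rw [hcdef]; linarith
  have hcT : c < T / 2 := by
    have h1 : 0 < 1 / y0 := div_pos one_pos hy0pos
    rw [hcdef]; linarith
  obtain ⟨ts, hts⟩ : ∃ ts : ℝ, ts = Real.log (T / (2 * c)) := ⟨_, rfl⟩
  have hargpos : 0 < T / (2 * c) := div_pos hT (by linarith)
  have htspos : 0 < ts := by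
    rw [hts]
    apply Real.log_pos
    rw [lt_div_iff₀ (by linarith : (0:ℝ) < 2 * c)]
    linarith
  have hexpts : Real.exp ts = T / (2 * c) := by rw [hts]; exact Real.exp_log hargpos
  obtain ⟨u, hudef⟩ : ∃ u : ℝ → ℝ, u = fun t => T / 2 - c * Real.exp t := ⟨_, rfl⟩
  have hcexp : c * Real.exp ts = T / 2 := by
    rw [hexpts]; field_simp
  have hueq : ∀ t, u t = c * (Real.exp ts - Real.exp t) := by
    intro t
    rw [hudef]
    simp only
    rw [mul_sub, hcexp]
  have hupos : ∀ t, t < ts → 0 < u t := by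
    intro t htlt
    rw [hueq]
    have := Real.exp_lt_exp.2 htlt
    nlinarith
  have hu0 : u 0 = 1 / y0 := by
    rw [hudef]; simp only [Real.exp_zero, mul_one]
    rw [hcdef]; ring
  have hu' : ∀ t, HasDerivAt u (-(c * Real.exp t)) t := by
    intro t
    rw [hudef]
    simpa using ((Real.hasDerivAt_exp t).const_mul c).const_sub (T / 2)
  obtain ⟨Y, hY⟩ : ∃ Y : ℝ → Fin (m + 1) → ℝ,
      Y = fun t i => if i = j.castSucc then (u t)⁻¹ else x i := ⟨_, rfl⟩
  have hlastne : (Fin.last m) ≠ j.castSucc := (Fin.castSucc_lt_last j).ne'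
  have hY0 : ∀ i, Y 0 i = if i = j.castSucc then y0 else x i := by
    intro i
    rw [hY]
    simp only
    split
    · rw [hu0, one_div, inv_inv]
    · rfl
  have hY0near : ‖Y 0 - x‖ < δ := by
    have hb : ‖Y 0 - x‖ ≤ η := by
      rw [pi_norm_le_iff_of_nonneg hηpos.le]
      intro i
      rw [Pi.sub_apply, hY0, Real.norm_eq_abs]
      split
      · rename_i h
        rw [h, hjx, hy0def]
        simp [abs_of_nonneg hηpos.le]
      · simp [hηpos.le]
    linarith
  -- Y solves the ODE on [0, ts)
  have hYlast : ∀ t, Y t (Fin.last m) = 0 := fun t => by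
    rw [hY]; simp only [if_neg hlastne]; exact hlast
  have hYsolve : ∀ t, 0 ≤ t → t < ts →
      HasDerivAt Y (Fq I AV pp AC T w (Y t)) t := by
    intro t ht0 htlt
    have hut := hupos t htlt
    rw [hasDerivAt_pi]
    intro i
    induction i using Fin.lastCases with
    | last =>
      have hfl : (fun s => Y s (Fin.last m)) = fun _ => (0:ℝ) := funext fun s => hYlast s
      rw [hfl, Fq_last, hYlast, neg_zero]
      exact hasDerivAt_const _ _
    | cast k =>
      by_cases hk : k = j
      · subst hk
        have hfun : (fun s => Y s k.castSucc) = fun s => (u s)⁻¹ := by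
          funext s; rw [hY]; simp
        rw [hfun]
        have hder : HasDerivAt (fun s => (u s)⁻¹) (-(-(c * Real.exp t)) / u t ^ 2) t :=
          (hu' t).inv (ne_of_gt hut)
        have hval : Fq I AV pp AC T w (Y t) k.castSucc = -(-(c * Real.exp t)) / u t ^ 2 := by
          rw [Fq_castSucc, hYlast, if_pos hjI]
          have hYk : Y t k.castSucc = (u t)⁻¹ := by rw [hY]; simp
          rw [hYk]
          have hTu : T / 2 - u t = c * Real.exp t := by
            rw [hudef]; simp only; ring
          have hune := ne_of_gt hut
          field_simp
          linear_combination 2 * hTu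
        rw [hval]
        exact hder
      · have hfun : (fun s => Y s k.castSucc) = fun _ => x k.castSucc := by
          funext s
          rw [hY]; simp only [if_neg (fun h => hk (Fin.castSucc_injective m h))]
        rw [hfun]
        have hval : Fq I AV pp AC T w (Y t) k.castSucc = 0 := by
          rw [Fq_castSucc, hYlast]
          have hYk : Y t k.castSucc = x k.castSucc := by
            rw [hY]; simp only [if_neg (fun h => hk (Fin.castSucc_injective m h))]
          rw [hYk]
          have h0 := hx k.castSucc
          rw [Fq_castSucc, hlast] at h0
          ring_nf
          ring_nf at h0
          linarith
        rw [hval]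
        exact hasDerivAt_const _ _
  have hsol : SolOn (fun z => Fq I AV pp AC T w z) Y (ENNReal.ofReal ts) := by
    intro t ht0 htlt
    rw [ENNReal.ofReal_lt_ofReal_iff htspos] at htlt
    exact hYsolve t ht0 htlt
  -- maximality
  have hmax : IsMaxSol (fun z => Fq I AV pp AC T w z) Y (ENNReal.ofReal ts) := by
    refine ⟨ENNReal.ofReal_pos.2 htspos, hsol, ?_⟩
    intro z T'' hT'' hsolz hz0
    -- z agrees with Y before ts, but z is continuous at ts while Y blows up
    have hzts : HasDerivAt z (Fq I AV pp AC T w (z ts)) ts :=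
      hsolz ts htspos.le hT''
    have hzc : ContinuousAt z ts := hzts.continuousAt
    obtain ⟨M, hM⟩ : ∃ M : ℝ, M = ‖z ts‖ + 1 := ⟨_, rfl⟩
    have hMpos : 0 < M := by rw [hM]; positivity
    obtain ⟨δ', hδ'pos, hδ'⟩ := Metric.continuousAt_iff.1 hzc 1 one_pos
    obtain ⟨A, hA⟩ : ∃ A : ℝ, A = c * Real.exp ts := ⟨_, rfl⟩
    have hApos : 0 < A := by rw [hA]; exact mul_pos hcpos (Real.exp_pos ts)
    have hdenpos : 0 < 2 * M * A + 1 := by nlinarith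
    obtain ⟨ρ, hρ⟩ : ∃ ρ : ℝ, ρ = min (δ' / 2) (min (ts / 2) (1 / (2 * M * A + 1))) :=
      ⟨_, rfl⟩
    have hρpos : 0 < ρ := by
      rw [hρ]
      apply lt_min (by linarith)
      exact lt_min (by linarith) (div_pos one_pos hdenpos)
    obtain ⟨b, hb⟩ : ∃ b : ℝ, b = ts - ρ := ⟨_, rfl⟩
    have hρts : ρ ≤ ts / 2 := by
      rw [hρ]; exact le_trans (min_le_right _ _) (min_le_left _ _)
    have hb0 : 0 ≤ b := by rw [hb]; linarith
    have hbts : b < ts := by rw [hb]; linarith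
    -- uniqueness of solutions on [0, b]
    have hzIcc : ∀ s ∈ Icc 0 b, HasDerivAt z (Fq I AV pp AC T w (z s)) s := by
      intro s hs
      apply hsolz s hs.1
      calc ENNReal.ofReal s ≤ ENNReal.ofReal b := ENNReal.ofReal_le_ofReal hs.2
        _ < ENNReal.ofReal ts := (ENNReal.ofReal_lt_ofReal_iff htspos).2 hbts
        _ < T'' := hT''
    have hYIcc : ∀ s ∈ Icc 0 b, HasDerivAt Y (Fq I AV pp AC T w (Y s)) s :=
      fun s hs => hYsolve s hs.1 (lt_of_le_of_lt hs.2 hbts)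
    have hzcont : ContinuousOn z (Icc 0 b) :=
      fun s hs => ((hzIcc s hs).continuousAt).continuousWithinAt
    have hYcont : ContinuousOn Y (Icc 0 b) :=
      fun s hs => ((hYIcc s hs).continuousAt).continuousWithinAt
    obtain ⟨Rz, hRz⟩ := isCompact_Icc.exists_bound_of_continuousOn hzcont
    obtain ⟨RY, hRY⟩ := isCompact_Icc.exists_bound_of_continuousOn hYcont
    obtain ⟨R, hR⟩ : ∃ R : ℝ, R = max Rz RY := ⟨_, rfl⟩
    have hR0 : 0 ≤ R := by
      have h1 := hRz 0 ⟨le_refl 0, hb0⟩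
      have h2 := norm_nonneg (z 0)
      rw [hR]
      have : 0 ≤ Rz := by linarith
      exact le_trans this (le_max_left _ _)
    have heqon : EqOn z Y (Icc 0 b) := by
      apply ODE_solution_unique_of_mem_Icc_right
        (v := fun _ p => Fq I AV pp AC T w p) (s := fun _ => closedBall 0 R)
      · intro t _
        exact myLipschitz I AV pp AC T w hT hR0
      · exact hzcont
      · intro s hs
        exact (hzIcc s ⟨hs.1, hs.2.le⟩).hasDerivWithinAt
      · intro s hs
        rw [mem_closedBall_zero_iff, hR]
        exact le_trans (hRz s ⟨hs.1, hs.2.le⟩) (le_max_left _ _)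
      · exact hYcont
      · intro s hs
        exact (hYIcc s ⟨hs.1, hs.2.le⟩).hasDerivWithinAt
      · intro s hs
        rw [mem_closedBall_zero_iff, hR]
        exact le_trans (hRY s ⟨hs.1, hs.2.le⟩) (le_max_right _ _)
      · exact hz0
    have hzb : z b = Y b := heqon ⟨hb0, le_refl b⟩
    -- size estimates
    have hubpos : 0 < u b := hupos b hbts
    have hub : u b ≤ A * ρ := by
      rw [hueq]
      have hexpb : Real.exp b = Real.exp ts * Real.exp (-ρ) := by
        rw [hb, sub_eq_add_neg, Real.exp_add]
      rw [hexpb]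
      have h1 : 1 - ρ ≤ Real.exp (-ρ) := by
        have := Real.add_one_le_exp (-ρ)
        linarith
      have h2 : Real.exp ts - Real.exp ts * Real.exp (-ρ)
          = Real.exp ts * (1 - Real.exp (-ρ)) := by ring
      rw [h2]
      have h3 : 1 - Real.exp (-ρ) ≤ ρ := by linarith
      have h4 : Real.exp ts * (1 - Real.exp (-ρ)) ≤ Real.exp ts * ρ :=
        mul_le_mul_of_nonneg_left h3 (Real.exp_pos ts).le
      calc c * (Real.exp ts * (1 - Real.exp (-ρ))) ≤ c * (Real.exp ts * ρ) :=
            mul_le_mul_of_nonneg_left h4 hcpos.le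
        _ = A * ρ := by rw [hA]; ring
    have hub2 : u b < 1 / (2 * M) := by
      have hρA : ρ ≤ 1 / (2 * M * A + 1) := by
        rw [hρ]; exact le_trans (min_le_right _ _) (min_le_right _ _)
      have h5 : A * ρ ≤ A / (2 * M * A + 1) := by
        rw [div_eq_mul_one_div A]
        exact mul_le_mul_of_nonneg_left hρA hApos.le
      have h6 : A / (2 * M * A + 1) < 1 / (2 * M) := by
        rw [div_lt_div_iff₀ hdenpos (by linarith)]
        ring_nf
        linarith
      linarith
    have hinv : 2 * M < (u b)⁻¹ := by
      have h7 := one_div_lt_one_div_of_lt hubpos hub2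
      rw [one_div_one_div] at h7
      rw [← one_div]
      exact h7
    have hYb : Y b j.castSucc = (u b)⁻¹ := by rw [hY]; simp
    have hbig : 2 * M < ‖Y b‖ := by
      calc 2 * M < (u b)⁻¹ := hinv
        _ = |Y b j.castSucc| := by rw [hYb, abs_of_pos (inv_pos.2 hubpos)]
        _ = ‖Y b j.castSucc‖ := (Real.norm_eq_abs _).symm
        _ ≤ ‖Y b‖ := norm_le_pi_norm (Y b) j.castSucc
    have hsmall : ‖z b‖ < M := by
      have hdist : dist b ts < δ' := by
        rw [Real.dist_eq, hb]
        have habs : |ts - ρ - ts| = ρ := by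
          rw [show ts - ρ - ts = -ρ by ring, abs_neg, abs_of_pos hρpos]
        rw [habs]
        have : ρ ≤ δ' / 2 := by rw [hρ]; exact min_le_left _ _
        linarith
      have h8 := hδ' hdist
      rw [dist_eq_norm] at h8
      calc ‖z b‖ = ‖z b - z ts + z ts‖ := by ring_nf
        _ ≤ ‖z b - z ts‖ + ‖z ts‖ := norm_add_le _ _
        _ < 1 + ‖z ts‖ := by linarith
        _ = M := by rw [hM]; ring
    rw [hzb] at hsmall
    linarith
  -- contradiction with asymptotic stability
  have hcontr := (hprop Y (ENNReal.ofReal ts) hmax hY0near).1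
  exact ENNReal.ofReal_ne_top hcontr

end Aux8
/-- the equilibrium points of (quadODE) are exactly the points `(ν,0)` with
`ν_i ∈ {0, 2/T}` for `i ∈ I` and `ν_i = 0` for `i ∉ I`; every equilibrium is hyperbolic
(all eigenvalues of the Jacobian equal `1` or `-1`), and the origin is the unique
asymptotically stable equilibrium point. -/
theorem stmt12 (m n : ℕ) (hm : 1 ≤ m)
    (I : Finset (Fin m)) (hI : I.Nonempty)
    (AV : Matrix (Fin m) (Fin m) ℝ)
    (hAVtri : ∀ i k : Fin m, i < k → AV i k = 0)
    (hAVdiag : ∀ i : Fin m, AV i i < 0)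
    (hAVoff : ∀ i k : Fin m, i ≠ k → 0 ≤ AV i k)
    (π : Fin m → Matrix (Fin n) (Fin n) ℝ)
    (hπ : ∀ i, (π i).PosSemidef)
    (AC : Matrix (Fin m) (Fin n) ℝ)
    (T : ℝ) (hT : 0 < T) (w : Fin n → ℝ) :
    (∀ x : Fin (m + 1) → ℝ,
      (∀ i, Fq I AV π AC T w x i = 0) ↔
        (x (Fin.last m) = 0 ∧ ∀ i : Fin m,
          (i ∈ I → (x i.castSucc = 0 ∨ x i.castSucc = 2 / T)) ∧
          (i ∉ I → x i.castSucc = 0)))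
    ∧ (∀ x : Fin (m + 1) → ℝ, (∀ i, Fq I AV π AC T w x i = 0) →
        ∀ μ ∈ spectrum ℂ
          ((LinearMap.toMatrix'
            (fderiv ℝ (fun z => Fq I AV π AC T w z) x).toLinearMap).map Complex.ofReal),
          μ = 1 ∨ μ = -1)
    ∧ AsympStablePt (fun z => Fq I AV π AC T w z) 0
    ∧ (∀ x : Fin (m + 1) → ℝ, (∀ i, Fq I AV π AC T w x i = 0) →
        AsympStablePt (fun z => Fq I AV π AC T w z) x → x = 0) :=
  ⟨fun x => myEquilChar I AV π AC T w hT x,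
    fun x hx => mySpectrum I AV π AC T w hT x hx,
    myOriginAsymp I AV π AC T w hT,
    fun x hx hs => myUnique I AV π AC T w hT x hx hs⟩

end
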